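/- Let A be a ring, J a two-sided ideal of A such that the blow-up ring Bl_J(A) is left Noetherian, and h a central element of A. Then for every finitely generated left A-module M: (1) the natural map M^∧/hM^∧ → (M/hM)^∧ between J-adic completions is an isomorphism; (2) if multiplication by h is injective on M, then multiplication by h is injective on the J-adic completion M^∧. -/

import Mathlib

open scoped Pointwise
open Polynomial

section PowSet

variable {A : Type*} [Ring A]

/-- The `n`-th power of a (two-sided) ideal `J` of a ring `A`, with the convention `J ^ 0 = A`,
realized as an additive subgroup of `A`. -/
def powSet (J : Ideal A) : ℕ → AddSubgroup A
  | 0 => ⊤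
  | 1 => J.toAddSubgroup
  | n + 2 => AddSubgroup.closure ((J : Set A) * (powSet J (n + 1) : Set A))

theorem powSet_succ_succ (J : Ideal A) (n : ℕ) :
    powSet J (n + 2) = AddSubgroup.closure ((J : Set A) * (powSet J (n + 1) : Set A)) := rfl

theorem powSet_mul_mem_left (J : Ideal A) :
    ∀ (n : ℕ) (a : A) {x : A}, x ∈ powSet J n → a * x ∈ powSet J n
  | 0, a, x, _ => AddSubgroup.mem_top _
  | 1, a, x, hx => J.mul_mem_left a hx
  | n + 2, a, x, hx => by
    induction hx using AddSubgroup.closure_induction with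
    | mem z hz =>
      obtain ⟨u, hu, v, hv, rfl⟩ := hz
      exact AddSubgroup.subset_closure
        ⟨a * u, J.mul_mem_left a hu, v, hv, mul_assoc a u v⟩
    | zero => simpa using (powSet J (n + 2)).zero_mem
    | add x y hx hy ihx ihy => simpa [mul_add] using add_mem ihx ihy
    | neg x hx ihx => simpa [mul_neg] using neg_mem ihx

theorem powSet_mul_mem_right (J : Ideal A) (hJ : ∀ x ∈ J, ∀ a : A, x * a ∈ J) :
    ∀ (n : ℕ) (a : A) {x : A}, x ∈ powSet J n → x * a ∈ powSet J n
  | 0, a, x, _ => AddSubgroup.mem_top _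
  | 1, a, x, hx => hJ x hx a
  | n + 2, a, x, hx => by
    induction hx using AddSubgroup.closure_induction with
    | mem z hz =>
      obtain ⟨u, hu, v, hv, rfl⟩ := hz
      exact AddSubgroup.subset_closure
        ⟨u, hu, v * a, powSet_mul_mem_right J hJ (n + 1) a hv, (mul_assoc u v a).symm⟩
    | zero => simpa using (powSet J (n + 2)).zero_mem
    | add x y hx hy ihx ihy => simpa [add_mul] using add_mem ihx ihy
    | neg x hx ihx => simpa [neg_mul] using neg_mem ihx

theorem powSet_mul_mem (J : Ideal A) (hJ : ∀ x ∈ J, ∀ a : A, x * a ∈ J) :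
    ∀ (i j : ℕ) {x y : A}, x ∈ powSet J i → y ∈ powSet J j → x * y ∈ powSet J (i + j)
  | 0, j, x, y, _, hy => by simpa using powSet_mul_mem_left J j x hy
  | 1, 0, x, y, hx, _ => by simpa using powSet_mul_mem_right J hJ 1 y hx
  | 1, j + 1, x, y, hx, hy => by
    rw [show 1 + (j + 1) = j + 2 from by omega, powSet_succ_succ]
    exact AddSubgroup.subset_closure ⟨x, hx, y, hy, rfl⟩
  | i + 2, j, x, y, hx, hy => by
    rw [show i + 2 + j = (i + j) + 2 from by omega, powSet_succ_succ]
    induction hx using AddSubgroup.closure_induction with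
    | mem z hz =>
      obtain ⟨u, hu, v, hv, rfl⟩ := hz
      have hvy : v * y ∈ powSet J (i + 1 + j) := powSet_mul_mem J hJ (i + 1) j hv hy
      rw [show i + 1 + j = i + j + 1 from by omega] at hvy
      exact AddSubgroup.subset_closure ⟨u, hu, v * y, hvy, (mul_assoc u v y).symm⟩
    | zero =>
      simpa using (AddSubgroup.closure ((J : Set A) * (powSet J (i + j + 1) : Set A))).zero_mem
    | add x₁ x₂ hx₁ hx₂ ih₁ ih₂ => simpa [add_mul] using add_mem ih₁ ih₂
    | neg x₁ hx₁ ih₁ => simpa [neg_mul] using neg_mem ih₁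

end PowSet

section BlowUp

variable {A : Type*} [Ring A]

/-- The blow-up ring `Bl_J(A) = ⊕_{i ≥ 0} J^i` of a two-sided ideal `J ⊆ A`, realized as the
subring of the polynomial ring `A[X]` consisting of the polynomials whose `X^i`-coefficient
lies in `J^i` for every `i`. -/
def blowUp (J : Ideal A) (hJ : ∀ x ∈ J, ∀ a : A, x * a ∈ J) : Subring A[X] where
  carrier := {p : A[X] | ∀ i : ℕ, p.coeff i ∈ powSet J i}
  zero_mem' := fun i => by
    simp only [Polynomial.coeff_zero]; exact (powSet J i).zero_mem
  one_mem' := fun i => by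
    rcases i with _ | i
    · exact AddSubgroup.mem_top _
    · simp only [Polynomial.coeff_one, Nat.succ_ne_zero, if_neg (Nat.succ_ne_zero i).symm]
      simpa using (powSet J (i + 1)).zero_mem
  add_mem' := fun {p q} hp hq i => by
    simpa [Polynomial.coeff_add] using add_mem (hp i) (hq i)
  neg_mem' := fun {p} hp i => by
    simpa [Polynomial.coeff_neg] using neg_mem (hp i)
  mul_mem' := fun {p q} hp hq n => by
    rw [Polynomial.coeff_mul]
    refine AddSubgroup.sum_mem _ fun c hc => ?_
    have h := powSet_mul_mem J hJ c.1 c.2 (hp c.1) (hq c.2)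
    rwa [show c.1 + c.2 = n from by simpa using hc] at h

end BlowUp

section Completion

variable {A : Type*} [Ring A]

theorem powSet_succ_le (J : Ideal A) :
    ∀ n : ℕ, powSet J (n + 1) ≤ powSet J n
  | 0 => le_top
  | n + 1 => by
    rw [powSet_succ_succ]
    refine (AddSubgroup.closure_le _).mpr ?_
    rintro z ⟨u, hu, v, hv, rfl⟩
    exact powSet_mul_mem_left J (n + 1) u hv

/-- For a subset `S ⊆ A` and a submodule `N` of an `A`-module `M`, the submodule `S·N` of `M`
spanned by all products `x • m` with `x ∈ S`, `m ∈ N`. -/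
def jsmul (S : Set A) {M : Type*} [AddCommGroup M] [Module A M] (N : Submodule A M) :
    Submodule A M :=
  Submodule.span A {z | ∃ x ∈ S, ∃ m ∈ N, z = x • m}

/-- The submodule `J^n M` of an `A`-module `M`. -/
def jadic (J : Ideal A) (M : Type*) [AddCommGroup M] [Module A M] (n : ℕ) : Submodule A M :=
  jsmul ((powSet J n : AddSubgroup A) : Set A) (⊤ : Submodule A M)

theorem jadic_succ_le (J : Ideal A) (M : Type*) [AddCommGroup M] [Module A M] (n : ℕ) :
    jadic J M (n + 1) ≤ jadic J M n := by
  refine Submodule.span_mono ?_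
  rintro z ⟨x, hx, m, hm, rfl⟩
  exact ⟨x, powSet_succ_le J n hx, m, hm, rfl⟩

/-- The transition map `M/J^{n+1}M → M/J^nM`. -/
def transition (J : Ideal A) (M : Type*) [AddCommGroup M] [Module A M] (n : ℕ) :
    (M ⧸ jadic J M (n + 1)) →ₗ[A] M ⧸ jadic J M n :=
  Submodule.mapQ _ _ LinearMap.id (fun _ hx => jadic_succ_le J M n hx)

/-- The `J`-adic completion `M^∧ = lim_n M/J^nM` of an `A`-module `M`, realized as the
module of compatible sequences in `∀ n, M/J^nM`. -/
def adicCompletion (J : Ideal A) (M : Type*) [AddCommGroup M] [Module A M] :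
    Submodule A (∀ n : ℕ, M ⧸ jadic J M n) where
  carrier := {f | ∀ n : ℕ, transition J M n (f (n + 1)) = f n}
  add_mem' := fun {f g} hf hg n => by
    simp only [Pi.add_apply, map_add, hf n, hg n]
  zero_mem' := fun n => by simp
  smul_mem' := fun a f hf n => by
    simp only [Pi.smul_apply, map_smul, hf n]

theorem jadic_le_comap (J : Ideal A) {M M₂ : Type*} [AddCommGroup M] [Module A M]
    [AddCommGroup M₂] [Module A M₂] (f : M →ₗ[A] M₂) (n : ℕ) :
    jadic J M n ≤ (jadic J M₂ n).comap f := by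
  rw [jadic, jsmul, Submodule.span_le]
  rintro z ⟨x, hx, m, _, rfl⟩
  simp only [SetLike.mem_coe, Submodule.mem_comap, map_smul]
  exact Submodule.subset_span ⟨x, hx, f m, Submodule.mem_top, rfl⟩

/-- The map `M/J^nM → M₂/J^nM₂` induced by a linear map `f : M → M₂`. -/
def inducedQ (J : Ideal A) {M M₂ : Type*} [AddCommGroup M] [Module A M]
    [AddCommGroup M₂] [Module A M₂] (f : M →ₗ[A] M₂) (n : ℕ) :
    (M ⧸ jadic J M n) →ₗ[A] M₂ ⧸ jadic J M₂ n :=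
  Submodule.mapQ _ _ f (jadic_le_comap J f n)

theorem transition_inducedQ (J : Ideal A) {M M₂ : Type*} [AddCommGroup M] [Module A M]
    [AddCommGroup M₂] [Module A M₂] (f : M →ₗ[A] M₂) (n : ℕ)
    (x : M ⧸ jadic J M (n + 1)) :
    transition J M₂ n (inducedQ J f (n + 1) x) = inducedQ J f n (transition J M n x) := by
  obtain ⟨m, rfl⟩ := Submodule.Quotient.mk_surjective _ x
  simp [transition, inducedQ, Submodule.mapQ_apply]

/-- The map `M^∧ → M₂^∧` between `J`-adic completions induced by a linear map `f : M → M₂`;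
this is the natural functorial structure of the `J`-adic completion. -/
def completionMap (J : Ideal A) {M M₂ : Type*} [AddCommGroup M] [Module A M]
    [AddCommGroup M₂] [Module A M₂] (f : M →ₗ[A] M₂) :
    adicCompletion J M →ₗ[A] adicCompletion J M₂ where
  toFun g := ⟨fun n => inducedQ J f n (g.1 n), fun n => by
    rw [transition_inducedQ, g.2 n]⟩
  map_add' g₁ g₂ := Subtype.ext (funext fun n => by
    simp [Submodule.coe_add, Pi.add_apply, map_add])
  map_smul' a g := Subtype.ext (funext fun n => by
    simp [Submodule.coe_smul, Pi.smul_apply, map_smul])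

end Completion

section CentralSmul

variable {A : Type*} [Ring A]

/-- Multiplication by a central element `h ∈ A` on a left `A`-module `M`, as an `A`-linear
endomorphism of `M`. -/
def centralSmul (h : A) (hcen : ∀ a : A, h * a = a * h) (M : Type*) [AddCommGroup M]
    [Module A M] : M →ₗ[A] M where
  toFun m := h • m
  map_add' := smul_add h
  map_smul' r m := by
    show h • (r • m) = r • (h • m)
    rw [smul_smul, smul_smul, hcen r]

end CentralSmul

section AuxBasic

variable {A : Type*} [Ring A]

theorem powSet_antitone (J : Ideal A) : ∀ {m n : ℕ}, m ≤ n → powSet J n ≤ powSet J m := by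
  intro m n hmn
  obtain ⟨k, rfl⟩ := Nat.exists_eq_add_of_le hmn
  clear hmn
  induction k with
  | zero => exact le_rfl
  | succ k ih => exact le_trans (powSet_succ_le J (m + k)) ih

theorem jadic_antitone (J : Ideal A) (M : Type*) [AddCommGroup M] [Module A M]
    {m n : ℕ} (hmn : m ≤ n) : jadic J M n ≤ jadic J M m := by
  refine Submodule.span_mono ?_
  rintro z ⟨x, hx, mm, hm, rfl⟩
  exact ⟨x, powSet_antitone J hmn hx, mm, hm, rfl⟩

theorem smul_mem_jadic (J : Ideal A) {M : Type*} [AddCommGroup M] [Module A M]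
    {n : ℕ} {x : A} (hx : x ∈ powSet J n) (m : M) : x • m ∈ jadic J M n :=
  Submodule.subset_span ⟨x, hx, m, Submodule.mem_top, rfl⟩

theorem jsmul_mono (S : Set A) {M : Type*} [AddCommGroup M] [Module A M]
    {N N₂ : Submodule A M} (hN : N ≤ N₂) : jsmul S N ≤ jsmul S N₂ := by
  refine Submodule.span_mono ?_
  rintro z ⟨x, hx, m, hm, rfl⟩
  exact ⟨x, hx, m, hN hm, rfl⟩

theorem map_jsmul_le (S : Set A) {M M₂ : Type*} [AddCommGroup M] [Module A M]
    [AddCommGroup M₂] [Module A M₂] (f : M →ₗ[A] M₂) (N : Submodule A M) :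
    Submodule.map f (jsmul S N) ≤ jsmul S (Submodule.map f N) := by
  rw [jsmul, Submodule.map_span, Submodule.span_le]
  rintro z ⟨w, ⟨x, hx, m, hm, rfl⟩, rfl⟩
  exact Submodule.subset_span ⟨x, hx, f m, ⟨m, hm, rfl⟩, map_smul f x m⟩

theorem jadic_map_surjective (J : Ideal A) {M M₂ : Type*} [AddCommGroup M] [Module A M]
    [AddCommGroup M₂] [Module A M₂] (f : M →ₗ[A] M₂) (hf : Function.Surjective f) (n : ℕ) :
    Submodule.map f (jadic J M n) = jadic J M₂ n := by
  rw [jadic, jadic, jsmul, jsmul, Submodule.map_span]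
  apply le_antisymm
  · rw [Submodule.span_le]
    rintro z ⟨w, ⟨x, hx, m, hm, rfl⟩, rfl⟩
    exact Submodule.subset_span ⟨x, hx, f m, Submodule.mem_top, map_smul f x m⟩
  · rw [Submodule.span_le]
    rintro z ⟨x, hx, m₂, hm₂, rfl⟩
    obtain ⟨m, rfl⟩ := hf m₂
    exact Submodule.subset_span ⟨x • m, ⟨x, hx, m, Submodule.mem_top, rfl⟩, map_smul f x m⟩

theorem transition_mk (J : Ideal A) (M : Type*) [AddCommGroup M] [Module A M] (n : ℕ) (x : M) :
    transition J M n (Submodule.Quotient.mk x) = Submodule.Quotient.mk x := by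
  unfold transition
  rw [Submodule.mapQ_apply]
  rfl

theorem inducedQ_mk (J : Ideal A) {M M₂ : Type*} [AddCommGroup M] [Module A M]
    [AddCommGroup M₂] [Module A M₂] (f : M →ₗ[A] M₂) (n : ℕ) (x : M) :
    inducedQ J f n (Submodule.Quotient.mk x) = Submodule.Quotient.mk (f x) := by
  unfold inducedQ
  rw [Submodule.mapQ_apply]

/-- A dependent recursive choice principle. -/
theorem exists_seq {α : ℕ → Sort*} {P : ∀ n, α n → Prop} {Q : ∀ n, α n → α (n + 1) → Prop}
    (base : ∃ a, P 0 a) (step : ∀ n a, P n a → ∃ b, P (n + 1) b ∧ Q n a b) :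
    ∃ F : ∀ n, α n, (∀ n, P n (F n)) ∧ ∀ n, Q n (F n) (F (n + 1)) := by
  choose f hf hq using step
  obtain ⟨a0, ha0⟩ := base
  let F : ∀ n, {a : α n // P n a} :=
    fun n => Nat.rec ⟨a0, ha0⟩ (fun n p => ⟨f n p.1 p.2, hf n p.1 p.2⟩) n
  exact ⟨fun n => (F n).1, fun n => (F n).2, fun n => hq n (F n).1 (F n).2⟩

theorem telescope_mem (J : Ideal A) {M : Type*} [AddCommGroup M] [Module A M]
    {m : ℕ → M} (hm : ∀ k, m (k + 1) - m k ∈ jadic J M k) (n : ℕ) :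
    ∀ a : ℕ, m (n + a) - m n ∈ jadic J M n := by
  intro a
  induction a with
  | zero => simp only [Nat.add_zero, sub_self]; exact (jadic J M n).zero_mem
  | succ a ih =>
    have h1 : m (n + a + 1) - m (n + a) ∈ jadic J M n :=
      jadic_antitone J M (Nat.le_add_right n a) (hm (n + a))
    have := add_mem h1 ih
    rw [sub_add_sub_cancel] at this
    exact this

theorem coeff_mem_powSet {J : Ideal A} {hJ : ∀ x ∈ J, ∀ a : A, x * a ∈ J}
    (x : blowUp J hJ) (i : ℕ) : (x : A[X]).coeff i ∈ powSet J i := x.2 i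

/-- The characterization of `J^n (A^k)` in the free module `A^k`. -/
theorem jadic_pi_iff (J : Ideal A) (hJ : ∀ x ∈ J, ∀ a : A, x * a ∈ J) {k : ℕ} (n : ℕ)
    (v : Fin k → A) :
    v ∈ jadic J (Fin k → A) n ↔ ∀ i, v i ∈ powSet J n := by
  classical
  constructor
  · intro hv
    induction hv using Submodule.span_induction with
    | mem z hz =>
      obtain ⟨x, hx, m, -, rfl⟩ := hz
      intro i
      exact powSet_mul_mem_right J hJ n (m i) hx
    | zero => intro i; exact (powSet J n).zero_mem
    | add a b _ _ iha ihb => intro i; exact add_mem (iha i) (ihb i)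
    | smul a x _ ih => intro i; exact powSet_mul_mem_left J n a (ih i)
  · intro hv
    let e : Fin k → (Fin k → A) := fun i => Pi.single i 1
    have hv' : v = ∑ i, (v i) • e i := by
      funext j
      simp [e, Finset.sum_apply, Pi.single_apply, mul_ite, Finset.sum_ite_eq]
    rw [hv']
    exact Submodule.sum_mem _ fun i _ => smul_mem_jadic J (hv i) _

section Rees

set_option synthInstance.maxHeartbeats 1000000
set_option maxHeartbeats 1000000

variable {A : Type*} [Ring A] (J : Ideal A) (hJ : ∀ x ∈ J, ∀ a : A, x * a ∈ J)

/-- The degree-`n` blSlice of a vector of polynomials in the blow-up ring. -/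
def blSlice {k : ℕ} (f : Fin k → blowUp J hJ) (n : ℕ) : Fin k → A :=
  fun i => ((f i : A[X])).coeff n

theorem blSlice_zero {k : ℕ} (n : ℕ) : blSlice J hJ (0 : Fin k → blowUp J hJ) n = 0 := by
  funext i; simp [blSlice]

theorem blSlice_add {k : ℕ} (f g : Fin k → blowUp J hJ) (n : ℕ) :
    blSlice J hJ (f + g) n = blSlice J hJ f n + blSlice J hJ g n := by
  funext i; simp [blSlice]

theorem blSlice_smul {k : ℕ} (r : blowUp J hJ) (f : Fin k → blowUp J hJ) (n : ℕ) :
    blSlice J hJ (r • f) n =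
      ∑ p ∈ Finset.HasAntidiagonal.antidiagonal n, ((r : A[X]).coeff p.1) • blSlice J hJ f p.2 := by
  funext i
  simp only [blSlice, Pi.smul_apply, smul_eq_mul, MulMemClass.coe_mul, Polynomial.coeff_mul,
    Finset.sum_apply]

theorem blSlice_sum {k : ℕ} {ι : Type*} (s : Finset ι) (F : ι → (Fin k → blowUp J hJ)) (n : ℕ) :
    blSlice J hJ (∑ g ∈ s, F g) n = ∑ g ∈ s, blSlice J hJ (F g) n := by
  funext i
  simp only [blSlice, Finset.sum_apply]
  rw [show ((∑ g ∈ s, F g i : blowUp J hJ) : A[X]) = ∑ g ∈ s, ((F g i : blowUp J hJ) : A[X])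
    from map_sum ((blowUp J hJ).subtype) _ s, Polynomial.finset_sum_coeff]

/-- The Rees module of a submodule `N'` of the free module `A^k`, as a module over the
blow-up ring. -/
def reesModule {k : ℕ} (N' : Submodule A (Fin k → A)) :
    Submodule (blowUp J hJ) (Fin k → blowUp J hJ) where
  carrier := {f | ∀ n, blSlice J hJ f n ∈ N'}
  zero_mem' := fun n => by rw [blSlice_zero]; exact N'.zero_mem
  add_mem' := fun {f g} hf hg n => by rw [blSlice_add]; exact N'.add_mem (hf n) (hg n)
  smul_mem' := fun r f hf n => by
    rw [blSlice_smul]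
    exact Submodule.sum_mem _ fun p _ => N'.smul_mem _ (hf p.2)

/-- Artin–Rees for the free module `A^k`. -/
theorem artinRees_free (hbl : IsNoetherianRing (blowUp J hJ)) (k : ℕ)
    (N' : Submodule A (Fin k → A)) :
    ∃ c : ℕ, ∀ n : ℕ, ∀ v : Fin k → A, (∀ i, v i ∈ powSet J (n + c)) → v ∈ N' →
      v ∈ jsmul ((powSet J n : AddSubgroup A) : Set A) N' := by
  classical
  haveI := hbl
  haveI : IsNoetherian (blowUp J hJ) (Fin k → blowUp J hJ) := isNoetherian_pi
  obtain ⟨s, hs⟩ := isNoetherian_def.mp this (reesModule J hJ N')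
  obtain ⟨c, hcb⟩ : ∃ c : ℕ, ∀ g ∈ s, ∀ i, ((g i : A[X])).natDegree ≤ c :=
    ⟨s.sup (fun g => Finset.univ.sup fun i => ((g i : A[X])).natDegree), fun g hg i =>
      le_trans
        (Finset.le_sup (f := fun i => ((g i : A[X])).natDegree) (Finset.mem_univ i))
        (Finset.le_sup (f := fun g => Finset.univ.sup fun i => ((g i : A[X])).natDegree) hg)⟩
  refine ⟨c, fun n v hv hvN => ?_⟩
  -- the monomial vector `v · X^(n+c)` lies in the Rees module
  set V : Fin k → blowUp J hJ := fun i =>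
    ⟨Polynomial.monomial (n + c) (v i), by
      intro j
      rw [Polynomial.coeff_monomial]
      split
      · next hj => exact hj ▸ hv i
      · exact (powSet J j).zero_mem⟩ with hV
  have hVslice : ∀ j, blSlice J hJ V j = if n + c = j then v else 0 := by
    intro j
    funext i
    simp only [blSlice, hV, Polynomial.coeff_monomial]
    split <;> simp
  have hVmem : V ∈ reesModule J hJ N' := by
    intro j
    rw [hVslice j]
    split
    · exact hvN
    · exact N'.zero_mem
  rw [← hs] at hVmem
  obtain ⟨r, -, hr⟩ := Submodule.mem_span_finset.mp hVmem
  have hvV : v = blSlice J hJ V (n + c) := by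
    rw [hVslice]; simp
  rw [hvV, ← hr, blSlice_sum]
  refine Submodule.sum_mem _ fun g hg => ?_
  rw [blSlice_smul]
  refine Submodule.sum_mem _ fun p hp => ?_
  by_cases hpc : p.2 ≤ c
  · -- low degree blSlice: genuine generator
    have hp1 : n ≤ p.1 := by
      have := Finset.HasAntidiagonal.mem_antidiagonal.mp hp
      omega
    have hx : ((r g : A[X])).coeff p.1 ∈ powSet J n :=
      powSet_antitone J hp1 (coeff_mem_powSet (r g) p.1)
    have hgN : g ∈ reesModule J hJ N' := by
      rw [← hs]; exact Submodule.subset_span hg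
    exact Submodule.subset_span ⟨_, hx, _, hgN p.2, rfl⟩
  · -- high degree blSlice vanishes
    have hzero : blSlice J hJ g p.2 = 0 := by
      funext i
      refine Polynomial.coeff_eq_zero_of_natDegree_lt ?_
      have h1 : ((g i : A[X])).natDegree ≤ c := hcb g hg i
      omega
    rw [hzero, smul_zero]
    exact Submodule.zero_mem _

end Rees

/-- **Artin–Rees** for a finitely generated module over a ring with left Noetherian
blow-up ring. -/
theorem artinRees {A : Type*} [Ring A] (J : Ideal A)
    (hJ : ∀ x ∈ J, ∀ a : A, x * a ∈ J) (hbl : IsNoetherianRing (blowUp J hJ))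
    (M : Type*) [AddCommGroup M] [Module A M] [Module.Finite A M] (N : Submodule A M) :
    ∃ c : ℕ, ∀ n : ℕ, ∀ y ∈ jadic J M (n + c), y ∈ N →
      y ∈ jsmul ((powSet J n : AddSubgroup A) : Set A) N := by
  classical
  obtain ⟨k, g, hg⟩ := Module.Finite.exists_fin (R := A) (M := M)
  let π : (Fin k → A) →ₗ[A] M :=
    { toFun := fun v => ∑ i, v i • g i
      map_add' := fun v w => by simp [add_smul, Finset.sum_add_distrib]
      map_smul' := fun a v => by simp [mul_smul, Finset.smul_sum] }
  have hπ : Function.Surjective π := by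
    rw [← LinearMap.range_eq_top]
    rw [eq_top_iff, ← hg, Submodule.span_le]
    rintro z ⟨i, rfl⟩
    refine ⟨Pi.single i 1, ?_⟩
    have hps : π (Pi.single i (1 : A)) = ∑ j, (Pi.single i (1 : A) : Fin k → A) j • g j := rfl
    rw [hps, Finset.sum_eq_single i]
    · simp
    · intro b _ hb; simp [Pi.single_apply, hb]
    · intro hi; exact absurd (Finset.mem_univ i) hi
  obtain ⟨c, hc⟩ := artinRees_free J hJ hbl k (N.comap π)
  refine ⟨c, fun n y hy hyN => ?_⟩
  rw [← jadic_map_surjective J π hπ (n + c)] at hy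
  obtain ⟨v, hv, rfl⟩ := hy
  have h3 := hc n v ((jadic_pi_iff J hJ (n + c) v).mp hv) hyN
  have h4 : π v ∈ Submodule.map π (jsmul ((powSet J n : AddSubgroup A) : Set A) (N.comap π)) :=
    ⟨v, h3, rfl⟩
  exact (le_trans (map_jsmul_le _ π _)
    (jsmul_mono _ (Submodule.map_comap_le π N))) h4

/-- The completion functor preserves surjectivity. -/
theorem completionMap_surjective {A : Type*} [Ring A] (J : Ideal A) {M M₂ : Type*}
    [AddCommGroup M] [Module A M] [AddCommGroup M₂] [Module A M₂]
    (f : M →ₗ[A] M₂) (hf : Function.Surjective f) :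
    Function.Surjective (completionMap J f) := by
  intro g
  have key : ∀ (n : ℕ) (x : M), Submodule.Quotient.mk (f x) = g.1 n →
      ∃ y : M, Submodule.Quotient.mk (f y) = g.1 (n + 1) ∧ y - x ∈ jadic J M n := by
    intro n x hx
    obtain ⟨q, hq⟩ := Submodule.Quotient.mk_surjective _ (g.1 (n + 1))
    have htr : (Submodule.Quotient.mk q : M₂ ⧸ jadic J M₂ n) = g.1 n := by
      have h2 := g.2 n
      rw [← hq, transition_mk] at h2
      exact h2
    have hsub : q - f x ∈ jadic J M₂ n :=
      (Submodule.Quotient.eq _).mp (htr.trans hx.symm)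
    rw [← jadic_map_surjective J f hf n] at hsub
    obtain ⟨d, hd, hdq⟩ := hsub
    refine ⟨x + d, ?_, by simpa using hd⟩
    rw [map_add, hdq, show f x + (q - f x) = q from by abel]
    exact hq
  obtain ⟨q0, hq0⟩ := Submodule.Quotient.mk_surjective _ (g.1 0)
  obtain ⟨x0, hx0⟩ := hf q0
  obtain ⟨m, hm, hdiff⟩ := exists_seq (P := fun n x => Submodule.Quotient.mk (f x) = g.1 n)
    (Q := fun n x y => y - x ∈ jadic J M n) ⟨x0, show Submodule.Quotient.mk (f x0) = g.1 0 by rw [hx0, hq0]⟩ key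
  refine ⟨⟨fun n => Submodule.Quotient.mk (m n), fun n => ?_⟩, ?_⟩
  · rw [transition_mk]
    exact (Submodule.Quotient.eq _).mpr (hdiff n)
  · apply Subtype.ext
    funext n
    show inducedQ J f n (Submodule.Quotient.mk (m n)) = g.1 n
    rw [inducedQ_mk]
    exact hm n

theorem jsmul_centralSmul_le {A : Type*} [Ring A] (J : Ideal A) (h : A)
    (hcen : ∀ a : A, h * a = a * h) (M : Type*) [AddCommGroup M] [Module A M] (n : ℕ) :
    jsmul ((powSet J n : AddSubgroup A) : Set A) (LinearMap.range (centralSmul h hcen M)) ≤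
      Submodule.map (centralSmul h hcen M) (jadic J M n) := by
  rw [jsmul, Submodule.span_le]
  rintro z ⟨x, hx, m, hm, rfl⟩
  obtain ⟨u, rfl⟩ := hm
  refine ⟨x • u, smul_mem_jadic J hx u, ?_⟩
  show h • (x • u) = x • (h • u)
  rw [smul_smul, smul_smul, hcen x]

end AuxBasic

/-- Let `A` be a ring, `J` a two-sided ideal of `A` such that the blow-up ring
`Bl_J(A)` is left Noetherian, and `h` a central element of `A`. Then for every finitely
generated left `A`-module `M`:
(1) the natural map `M^∧/hM^∧ → (M/hM)^∧` is an isomorphism (expressed here by saying that the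
natural map `M^∧ → (M/hM)^∧` is surjective with kernel `h·M^∧`), and
(2) if multiplication by `h` is injective on `M`, then it is injective on `M^∧`. -/
theorem completion_flat_basechange {A : Type*} [Ring A] (J : Ideal A)
    (hJtwoSided : ∀ x ∈ J, ∀ a : A, x * a ∈ J)
    (hbl : IsNoetherianRing (blowUp J hJtwoSided))
    (h : A) (hcen : ∀ a : A, h * a = a * h)
    (M : Type*) [AddCommGroup M] [Module A M] [Module.Finite A M] :
    (Function.Surjective
        (completionMap J (Submodule.mkQ (LinearMap.range (centralSmul h hcen M)))) ∧
      LinearMap.ker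
          (completionMap J (Submodule.mkQ (LinearMap.range (centralSmul h hcen M)))) =
        LinearMap.range (centralSmul h hcen (adicCompletion J M))) ∧
    (Function.Injective (centralSmul h hcen M) →
      Function.Injective (centralSmul h hcen (adicCompletion J M))) := by
  classical
  set N := LinearMap.range (centralSmul h hcen M) with hN
  obtain ⟨c, hc⟩ := artinRees J hJtwoSided hbl M N
  have hD : ∀ (n : ℕ) (z : M), z ∈ jsmul ((powSet J n : AddSubgroup A) : Set A) N →
      ∃ w ∈ jadic J M n, z = h • w := by
    intro n z hz
    obtain ⟨w, hw, hwz⟩ := jsmul_centralSmul_le J h hcen M n hz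
    exact ⟨w, hw, hwz.symm⟩
  have hquot : ∀ n : ℕ, jadic J (M ⧸ N) n = Submodule.map N.mkQ (jadic J M n) :=
    fun n => (jadic_map_surjective J N.mkQ (Submodule.mkQ_surjective N) n).symm
  refine ⟨⟨completionMap_surjective J N.mkQ (Submodule.mkQ_surjective N), ?_⟩, ?_⟩
  · -- kernel identification
    apply le_antisymm
    · -- ker ≤ h • M^∧
      intro f hf
      have hf0 : completionMap J N.mkQ f = 0 := LinearMap.mem_ker.mp hf
      choose m hm using fun n => Submodule.Quotient.mk_surjective _ (f.1 n)
      have hdm : ∀ n, m (n + 1) - m n ∈ jadic J M n := by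
        intro n
        have h2 := f.2 n
        rw [← hm (n + 1), ← hm n, transition_mk] at h2
        exact (Submodule.Quotient.eq _).mp h2
      have htel : ∀ n a, m (n + a) - m n ∈ jadic J M n := telescope_mem J hdm
      have hker : ∀ n, ∃ j ∈ jadic J M n, m n - j ∈ N := by
        intro n
        have h0 : inducedQ J N.mkQ n (f.1 n) = 0 := by
          have h1 : (completionMap J N.mkQ f).1 n = (0 : adicCompletion J (M ⧸ N)).1 n := by
            rw [hf0]
          exact h1
        rw [← hm n, inducedQ_mk] at h0
        have h2 : N.mkQ (m n) ∈ jadic J (M ⧸ N) n := (Submodule.Quotient.mk_eq_zero _).mp h0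
        rw [hquot n] at h2
        obtain ⟨j, hj, hjm⟩ := h2
        refine ⟨j, hj, ?_⟩
        have h3 : (Submodule.Quotient.mk (m n) : M ⧸ N) = Submodule.Quotient.mk j := hjm.symm
        exact (Submodule.Quotient.eq N).mp h3
      -- base of recursion
      obtain ⟨j0, hj0, hj0N⟩ := hker c
      obtain ⟨u0, hu0⟩ := hj0N
      have base : h • u0 - m (0 + c) ∈ jadic J M (0 + c) := by
        rw [zero_add]
        have : h • u0 - m c = -j0 := by
          rw [show h • u0 = m c - j0 from hu0]; abel
        rw [this]
        exact neg_mem hj0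
      have step : ∀ (n : ℕ) (u : M), h • u - m (n + c) ∈ jadic J M (n + c) →
          ∃ u' : M, (h • u' - m (n + 1 + c) ∈ jadic J M (n + 1 + c)) ∧
            u' - u ∈ jadic J M n := by
        intro n u hu
        obtain ⟨j', hj', hj'N⟩ := hker (n + c + 1)
        obtain ⟨vv, hvv⟩ := hj'N
        have hξ : m (n + c + 1) - h • u - j' ∈ jadic J M (n + c) := by
          have t1 : m (n + c + 1) - m (n + c) ∈ jadic J M (n + c) := hdm (n + c)
          have t3 : j' ∈ jadic J M (n + c) := jadic_antitone J M (Nat.le_succ _) hj'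
          have t4 := sub_mem (sub_mem t1 hu) t3
          have e : m (n + c + 1) - m (n + c) - (h • u - m (n + c)) - j' =
              m (n + c + 1) - h • u - j' := by abel
          rwa [e] at t4
        have hξN : m (n + c + 1) - h • u - j' ∈ N := by
          refine ⟨vv - u, ?_⟩
          show h • (vv - u) = m (n + c + 1) - h • u - j'
          rw [smul_sub, show h • vv = m (n + c + 1) - j' from hvv]
          abel
        obtain ⟨w, hw, hweq⟩ := hD n _ (hc n _ hξ hξN)
        refine ⟨u + w, ?_, by simpa using hw⟩
        rw [show n + 1 + c = n + c + 1 from by omega]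
        have e2 : h • (u + w) - m (n + c + 1) = -j' := by
          rw [smul_add, show h • w = m (n + c + 1) - h • u - j' from hweq.symm]
          abel
        rw [e2]
        exact neg_mem (jadic_antitone J M (by omega) hj')
      obtain ⟨u, hu1, hu2⟩ := exists_seq
        (P := fun n x => h • x - m (n + c) ∈ jadic J M (n + c))
        (Q := fun n x y => y - x ∈ jadic J M n) ⟨u0, base⟩ step
      refine ⟨⟨fun n => Submodule.Quotient.mk (u n), fun n => by
        rw [transition_mk]; exact (Submodule.Quotient.eq _).mpr (hu2 n)⟩, ?_⟩
      apply Subtype.ext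
      funext n
      show h • (Submodule.Quotient.mk (u n) : M ⧸ jadic J M n) = f.1 n
      rw [← Submodule.Quotient.mk_smul, ← hm n]
      refine (Submodule.Quotient.eq _).mpr ?_
      have t1 : h • u n - m (n + c) ∈ jadic J M n :=
        jadic_antitone J M (Nat.le_add_right n c) (hu1 n)
      have t2 := add_mem t1 (htel n c)
      have e : h • u n - m (n + c) + (m (n + c) - m n) = h • u n - m n := by abel
      rwa [e] at t2
    · -- h • M^∧ ≤ ker
      rintro f ⟨gg, rfl⟩
      rw [LinearMap.mem_ker]
      apply Subtype.ext
      funext n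
      obtain ⟨x, hx⟩ := Submodule.Quotient.mk_surjective _ (gg.1 n)
      show inducedQ J N.mkQ n (h • gg.1 n) = 0
      rw [← hx, ← Submodule.Quotient.mk_smul, inducedQ_mk]
      have h1 : N.mkQ (h • x) = 0 := by
        rw [Submodule.mkQ_apply]
        exact (Submodule.Quotient.mk_eq_zero N).mpr ⟨x, rfl⟩
      rw [h1]
      exact Submodule.Quotient.mk_zero _
  · -- injectivity
    intro hinj
    have hzero : ∀ fz : adicCompletion J M,
        centralSmul h hcen (adicCompletion J M) fz = 0 → fz = 0 := by
      intro fz hfz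
      choose m hm using fun n => Submodule.Quotient.mk_surjective _ (fz.1 n)
      have hdm : ∀ n, m (n + 1) - m n ∈ jadic J M n := by
        intro n
        have h2 := fz.2 n
        rw [← hm (n + 1), ← hm n, transition_mk] at h2
        exact (Submodule.Quotient.eq _).mp h2
      have htel : ∀ n a, m (n + a) - m n ∈ jadic J M n := telescope_mem J hdm
      have hcomp : ∀ n, h • m n ∈ jadic J M n := by
        intro n
        have h1 : h • fz.1 n = (0 : adicCompletion J M).1 n := by rw [← hfz]; rfl
        have h2 : (Submodule.Quotient.mk (h • m n) : M ⧸ jadic J M n) = 0 := by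
          rw [Submodule.Quotient.mk_smul, hm n]
          exact h1
        exact (Submodule.Quotient.mk_eq_zero _).mp h2
      apply Subtype.ext
      funext n
      show fz.1 n = 0
      rw [← hm n]
      refine (Submodule.Quotient.mk_eq_zero _).mpr ?_
      have hA : h • m (n + c) ∈ jadic J M (n + c) := hcomp (n + c)
      have hB : h • m (n + c) ∈ N := ⟨m (n + c), rfl⟩
      obtain ⟨w, hw, hweq⟩ := hD n _ (hc n _ hA hB)
      have hmw : m (n + c) = w := hinj hweq
      have hmn : m (n + c) ∈ jadic J M n := hmw ▸ hw
      have t := sub_mem hmn (htel n c)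
      have e : m (n + c) - (m (n + c) - m n) = m n := by abel
      rwa [e] at t
    intro a b hab
    have h1 : centralSmul h hcen (adicCompletion J M) (a - b) = 0 := by
      rw [map_sub, hab, sub_self]
    exact sub_eq_zero.mp (hzero _ h1)
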